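/- Let H ∈ C^{k+1}(ℝ², Sym₂(ℝ²)), λ > 0, Γ₀ ∈ C(ℝ,ℝ), and let Γ_{i+1} be defined recursively by Γ_{i+1}′ = Γᵢ for i = 0,…,k. Then (Γ₀(λx₁)/λ) H = (−1)^{k+1} (Γ_{k+1}(λx₁)/λ^{k+2}) sym∇L_k + sym∇( Σ_{i=0}^{k} (−1)^i (Γ_{i+1}(λx₁)/λ^{i+2}) Lᵢ ) + ( Σ_{i=0}^{k} (−1)^i (Γᵢ(λx₁)/λ^{i+1}) Pᵢ ) e₂⊗e₂, where L₀ = (H₁₁, 2H₁₂), P₀ = H₂₂, and for i ≥ 1: Lᵢ = (∂₁^{(i)}H₁₁, 2∂₁^{(i)}H₁₂ + i ∂₁^{(i−1)}∂₂H₁₁) and Pᵢ = 2∂₁^{(i−1)}∂₂H₁₂ + (i−1) ∂₁^{(i−2)}∂₂²H₁₁. -/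

import Mathlib

open Finset

/-- Partial derivative in the first coordinate. -/
noncomputable def pone (f : (Fin 2 → ℝ) → ℝ) : (Fin 2 → ℝ) → ℝ :=
  fun x => fderiv ℝ f x (Pi.single 0 1)

/-- Partial derivative in the second coordinate. -/
noncomputable def ptwo (f : (Fin 2 → ℝ) → ℝ) : (Fin 2 → ℝ) → ℝ :=
  fun x => fderiv ℝ f x (Pi.single 1 1)

/-- Symmetric gradient of a vector field `L : ℝ² → ℝ²`. -/
noncomputable def symGrad (L : (Fin 2 → ℝ) → (Fin 2 → ℝ)) (x : Fin 2 → ℝ) :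
    Fin 2 → Fin 2 → ℝ :=
  fun i j => (fderiv ℝ L x (Pi.single i 1) j + fderiv ℝ L x (Pi.single j 1) i) / 2

/-- The matrix `e₂ ⊗ e₂`. -/
def E22 : Fin 2 → Fin 2 → ℝ :=
  fun i j => (if i = 1 then (1 : ℝ) else 0) * (if j = 1 then (1 : ℝ) else 0)

/-- The vector fields `Lᵢ`: `L₀ = (H₁₁, 2H₁₂)`, and
`Lᵢ = (∂₁⁽ⁱ⁾H₁₁, 2∂₁⁽ⁱ⁾H₁₂ + i ∂₁⁽ⁱ⁻¹⁾∂₂H₁₁)` for `i ≥ 1`. -/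
noncomputable def Lcoef (H : (Fin 2 → ℝ) → (Fin 2 → Fin 2 → ℝ)) (i : ℕ) :
    (Fin 2 → ℝ) → (Fin 2 → ℝ) :=
  fun x => ![pone^[i] (fun y => H y 0 0) x,
    2 * pone^[i] (fun y => H y 0 1) x +
      (i : ℝ) * pone^[i - 1] (ptwo (fun y => H y 0 0)) x]

/-- The scalar fields `Pᵢ`: `P₀ = H₂₂`, and
`Pᵢ = 2∂₁⁽ⁱ⁻¹⁾∂₂H₁₂ + (i−1)∂₁⁽ⁱ⁻²⁾∂₂²H₁₁` for `i ≥ 1`. -/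
noncomputable def Pcoef (H : (Fin 2 → ℝ) → (Fin 2 → Fin 2 → ℝ)) (i : ℕ) :
    (Fin 2 → ℝ) → ℝ :=
  fun x => if i = 0 then H x 1 1 else
    2 * pone^[i - 1] (ptwo (fun y => H y 0 1)) x +
      ((i : ℝ) - 1) * pone^[i - 2] (ptwo (ptwo (fun y => H y 0 0))) x

/- ### Auxiliary lemmas -/

lemma contDiff_pone {f : (Fin 2 → ℝ) → ℝ} {n : ℕ} (hf : ContDiff ℝ (n + 1 : ℕ) f) :
    ContDiff ℝ (n : ℕ) (pone f) := by
  have h1 : ContDiff ℝ (n : ℕ) (fderiv ℝ f) := by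
    apply hf.fderiv_right
    norm_cast
  exact h1.clm_apply contDiff_const

lemma contDiff_ptwo {f : (Fin 2 → ℝ) → ℝ} {n : ℕ} (hf : ContDiff ℝ (n + 1 : ℕ) f) :
    ContDiff ℝ (n : ℕ) (ptwo f) := by
  have h1 : ContDiff ℝ (n : ℕ) (fderiv ℝ f) := by
    apply hf.fderiv_right
    norm_cast
  exact h1.clm_apply contDiff_const

lemma contDiff_pone_iter {n : ℕ} :
    ∀ (i : ℕ) {f : (Fin 2 → ℝ) → ℝ}, ContDiff ℝ (i + n : ℕ) f →
      ContDiff ℝ (n : ℕ) (pone^[i] f) := by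
  intro i
  induction i with
  | zero => intro f hf; simpa using hf
  | succ m ih =>
    intro f hf
    rw [Function.iterate_succ_apply]
    apply ih
    apply contDiff_pone
    apply hf.of_le
    norm_cast
    omega

lemma diffAt_iter {f : (Fin 2 → ℝ) → ℝ} {n m : ℕ} (hf : ContDiff ℝ (n : ℕ) f)
    (hm : m < n) (x : Fin 2 → ℝ) : DifferentiableAt ℝ (pone^[m] f) x := by
  have h1 : ContDiff ℝ (1 : ℕ) (pone^[m] f) := by
    apply contDiff_pone_iter m
    apply hf.of_le
    exact_mod_cast hm
  exact (h1.differentiable (by simp)).differentiableAt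

lemma swap_base {f : (Fin 2 → ℝ) → ℝ} (hf : ContDiff ℝ 2 f) :
    ptwo (pone f) = pone (ptwo f) := by
  funext x
  have hsym : IsSymmSndFDerivAt ℝ f x := hf.contDiffAt.isSymmSndFDerivAt (by simp [minSmoothness_of_isRCLikeNormedField])
  have hd : DifferentiableAt ℝ (fderiv ℝ f) x := by
    have : ContDiff ℝ 1 (fderiv ℝ f) := hf.fderiv_right (by norm_num)
    exact this.differentiable (by simp) x
  have key : ∀ v w : Fin 2 → ℝ,
      fderiv ℝ (fun y => fderiv ℝ f y v) x w = fderiv ℝ (fderiv ℝ f) x w v := by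
    intro v w
    have h := fderiv_clm_apply (c := fderiv ℝ f) (u := fun _ => v) hd (differentiableAt_const v)
    rw [show (fun y => fderiv ℝ f y v)
        = (fun y => (fderiv ℝ f y) ((fun _ : Fin 2 → ℝ => v) y)) from rfl, h]
    simp
  show fderiv ℝ (fun y => fderiv ℝ f y (Pi.single 0 1)) x (Pi.single 1 1)
      = fderiv ℝ (fun y => fderiv ℝ f y (Pi.single 1 1)) x (Pi.single 0 1)
  rw [key, key, hsym]

lemma swap_iter : ∀ (n : ℕ) {f : (Fin 2 → ℝ) → ℝ}, ContDiff ℝ (n + 1 : ℕ) f →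
    ptwo (pone^[n] f) = pone^[n] (ptwo f) := by
  intro n
  induction n with
  | zero => intro f _; simp
  | succ m ih =>
    intro f hf
    have h2 : ContDiff ℝ 2 f := hf.of_le (by norm_cast; omega)
    have h1 : ContDiff ℝ (m + 1 : ℕ) (pone f) := by
      apply contDiff_pone (n := m + 1)
      exact_mod_cast hf
    rw [Function.iterate_succ_apply, ih h1, swap_base h2, ← Function.iterate_succ_apply]

lemma fderiv_iter_e1 (f : (Fin 2 → ℝ) → ℝ) (m : ℕ) (x : Fin 2 → ℝ) :
    fderiv ℝ (pone^[m] f) x (Pi.single 0 1) = pone^[m + 1] f x := by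
  rw [Function.iterate_succ_apply']
  rfl

lemma fderiv_iter_e2 {f : (Fin 2 → ℝ) → ℝ} {n m : ℕ} (hf : ContDiff ℝ (n : ℕ) f)
    (hm : m < n) (x : Fin 2 → ℝ) :
    fderiv ℝ (pone^[m] f) x (Pi.single 1 1) = pone^[m] (ptwo f) x := by
  have h := swap_iter m (f := f) (hf.of_le (by exact_mod_cast hm))
  exact congrFun h x

lemma lc1_facts {f g : (Fin 2 → ℝ) → ℝ} {n i : ℕ} (hf : ContDiff ℝ (n + 1 : ℕ) f)
    (hg : ContDiff ℝ (n + 1 : ℕ) g) (hi : i ≤ n) (x : Fin 2 → ℝ) :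
    DifferentiableAt ℝ (fun y => 2 * pone^[i] g y + (i : ℝ) * pone^[i - 1] (ptwo f) y) x ∧
    fderiv ℝ (fun y => 2 * pone^[i] g y + (i : ℝ) * pone^[i - 1] (ptwo f) y) x (Pi.single 0 1)
      = 2 * pone^[i + 1] g x + (i : ℝ) * pone^[i] (ptwo f) x ∧
    fderiv ℝ (fun y => 2 * pone^[i] g y + (i : ℝ) * pone^[i - 1] (ptwo f) y) x (Pi.single 1 1)
      = 2 * pone^[i] (ptwo g) x + (i : ℝ) * pone^[i - 1] (ptwo (ptwo f)) x := by
  rcases i with _ | m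
  · have he : (fun y => 2 * pone^[0] g y + ((0 : ℕ) : ℝ) * pone^[0 - 1] (ptwo f) y)
        = fun y => 2 * g y := by
      funext y; simp
    have hgd : DifferentiableAt ℝ g x :=
      (hg.differentiable (by simp)).differentiableAt
    have hG : HasFDerivAt (fun y => 2 * g y) ((2 : ℝ) • fderiv ℝ g x) x :=
      hgd.hasFDerivAt.const_mul 2
    rw [he]
    refine ⟨hG.differentiableAt, ?_, ?_⟩
    · rw [hG.fderiv]
      simp [pone]
    · rw [hG.fderiv]
      simp [ptwo]
  · have h1 : DifferentiableAt ℝ (pone^[m + 1] g) x := diffAt_iter hg (by omega) x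
    have h2 : DifferentiableAt ℝ (pone^[m] (ptwo f)) x :=
      diffAt_iter (contDiff_ptwo hf) (by omega) x
    have hD : HasFDerivAt
        (fun y => 2 * pone^[m + 1] g y + ((m + 1 : ℕ) : ℝ) * pone^[m] (ptwo f) y)
        ((2 : ℝ) • fderiv ℝ (pone^[m + 1] g) x
          + ((m + 1 : ℕ) : ℝ) • fderiv ℝ (pone^[m] (ptwo f)) x) x :=
      (h1.hasFDerivAt.const_mul 2).add (h2.hasFDerivAt.const_mul _)
    simp only [Nat.add_sub_cancel]
    refine ⟨hD.differentiableAt, ?_, ?_⟩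
    · rw [hD.fderiv]
      simp only [ContinuousLinearMap.add_apply, ContinuousLinearMap.smul_apply, smul_eq_mul]
      rw [fderiv_iter_e1, fderiv_iter_e1]
    · rw [hD.fderiv]
      simp only [ContinuousLinearMap.add_apply, ContinuousLinearMap.smul_apply, smul_eq_mul]
      rw [fderiv_iter_e2 hg (by omega) x, fderiv_iter_e2 (contDiff_ptwo hf) (by omega) x]

lemma hasFDerivAt_coef {k : ℕ} (Γ : ℕ → ℝ → ℝ) {l : ℝ} (hl : 0 < l)
    (hrec : ∀ i ≤ k, ∀ t : ℝ, HasDerivAt (Γ (i + 1)) (Γ i t) t)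
    (x : Fin 2 → ℝ) {i : ℕ} (hi : i ≤ k) :
    HasFDerivAt (fun y : Fin 2 → ℝ => (-1 : ℝ) ^ i * Γ (i + 1) (l * y 0) / l ^ (i + 2))
      (((-1 : ℝ) ^ i * Γ i (l * x 0) / l ^ (i + 1)) •
        (ContinuousLinearMap.proj 0 : (Fin 2 → ℝ) →L[ℝ] ℝ)) x := by
  have h0 : HasFDerivAt (fun y : Fin 2 → ℝ => y 0)
      (ContinuousLinearMap.proj 0 : (Fin 2 → ℝ) →L[ℝ] ℝ) x :=
    (ContinuousLinearMap.proj (R := ℝ) (φ := fun _ : Fin 2 => ℝ) 0).hasFDerivAt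
  have h1 := h0.const_mul l
  have h2 := (hrec i hi (l * x 0)).comp_hasFDerivAt x h1
  have h3 := (h2.const_mul ((-1 : ℝ) ^ i)).mul_const ((l ^ (i + 2))⁻¹)
  have heq : (fun y : Fin 2 → ℝ => (-1 : ℝ) ^ i * Γ (i + 1) (l * y 0) / l ^ (i + 2))
      = fun y => (-1 : ℝ) ^ i * ((Γ (i + 1)) ∘ fun y : Fin 2 → ℝ => l * y 0) y
          * (l ^ (i + 2))⁻¹ := by
    funext y; simp [Function.comp, div_eq_mul_inv]
  rw [heq]
  refine h3.congr_fderiv ?_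
  ext v
  have hl' : l ≠ 0 := ne_of_gt hl
  simp [ContinuousLinearMap.smul_apply]
  field_simp
  ring

lemma symGrad_apply {L : (Fin 2 → ℝ) → (Fin 2 → ℝ)} {x : Fin 2 → ℝ}
    (hL : ∀ j, DifferentiableAt ℝ (fun y => L y j) x) (i j : Fin 2) :
    symGrad L x i j = (fderiv ℝ (fun y => L y j) x (Pi.single i 1)
      + fderiv ℝ (fun y => L y i) x (Pi.single j 1)) / 2 := by
  have hfd : fderiv ℝ L x = ContinuousLinearMap.pi (fun j => fderiv ℝ (fun y => L y j) x) :=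
    fderiv_pi hL
  simp [symGrad, hfd]

theorem stmt9 (k : ℕ) (H : (Fin 2 → ℝ) → (Fin 2 → Fin 2 → ℝ))
    (hH : ContDiff ℝ (k + 1 : ℕ) H) (hsym : ∀ x, H x 0 1 = H x 1 0)
    (l : ℝ) (hl : 0 < l)
    (Γ : ℕ → ℝ → ℝ) (hΓ0 : Continuous (Γ 0))
    (hrec : ∀ i ≤ k, ∀ t : ℝ, HasDerivAt (Γ (i + 1)) (Γ i t) t) :
    ∀ x : Fin 2 → ℝ,
      (fun i j => Γ 0 (l * x 0) / l * H x i j)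
      = (fun i j => (-1 : ℝ) ^ (k + 1) * (Γ (k + 1) (l * x 0) / l ^ (k + 2)) *
            symGrad (Lcoef H k) x i j)
        + symGrad (fun y i' =>
            ∑ i ∈ range (k + 1),
              ((-1 : ℝ) ^ i * Γ (i + 1) (l * y 0) / l ^ (i + 2)) * Lcoef H i y i') x
        + fun i j =>
            (∑ i' ∈ range (k + 1),
              (-1 : ℝ) ^ i' * Γ i' (l * x 0) / l ^ (i' + 1) * Pcoef H i' x) * E22 i j := by
  intro x
  have hl' : l ≠ 0 := ne_of_gt hl
  have hf : ContDiff ℝ (k + 1 : ℕ) (fun y => H y 0 0) := contDiff_pi.mp (contDiff_pi.mp hH 0) 0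
  have hg : ContDiff ℝ (k + 1 : ℕ) (fun y => H y 0 1) := contDiff_pi.mp (contDiff_pi.mp hH 0) 1
  have hFd : ∀ m, m ≤ k → DifferentiableAt ℝ (pone^[m] (fun y => H y 0 0)) x :=
    fun m hm => diffAt_iter hf (by omega) x
  have hF2 : ∀ m, m ≤ k → fderiv ℝ (pone^[m] (fun y => H y 0 0)) x (Pi.single 1 1)
      = pone^[m] (ptwo (fun y => H y 0 0)) x := fun m hm => fderiv_iter_e2 hf (by omega) x
  have hLc1 := fun (i : ℕ) (hi : i ≤ k) => lc1_facts (n := k) hf hg hi x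
  have hA := fun (i : ℕ) (hi : i ≤ k) => hasFDerivAt_coef Γ hl hrec x hi
  -- derivative of the first component of the big sum field
  have hS0 : HasFDerivAt
      (fun y => ∑ i ∈ range (k + 1),
        ((-1 : ℝ) ^ i * Γ (i + 1) (l * y 0) / l ^ (i + 2)) * pone^[i] (fun y => H y 0 0) y)
      (∑ i ∈ range (k + 1),
        (((-1 : ℝ) ^ i * Γ (i + 1) (l * x 0) / l ^ (i + 2)) •
            fderiv ℝ (pone^[i] (fun y => H y 0 0)) x
          + pone^[i] (fun y => H y 0 0) x •
            (((-1 : ℝ) ^ i * Γ i (l * x 0) / l ^ (i + 1)) •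
              (ContinuousLinearMap.proj 0 : (Fin 2 → ℝ) →L[ℝ] ℝ)))) x := by
    apply HasFDerivAt.fun_sum
    intro i hi
    have hik : i ≤ k := by simp only [mem_range] at hi; omega
    exact (hA i hik).mul (hFd i hik).hasFDerivAt
  have hS1 : HasFDerivAt
      (fun y => ∑ i ∈ range (k + 1),
        ((-1 : ℝ) ^ i * Γ (i + 1) (l * y 0) / l ^ (i + 2)) *
          (2 * pone^[i] (fun y => H y 0 1) y
            + (i : ℝ) * pone^[i - 1] (ptwo (fun y => H y 0 0)) y))
      (∑ i ∈ range (k + 1),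
        (((-1 : ℝ) ^ i * Γ (i + 1) (l * x 0) / l ^ (i + 2)) •
            fderiv ℝ (fun y => 2 * pone^[i] (fun y => H y 0 1) y
              + (i : ℝ) * pone^[i - 1] (ptwo (fun y => H y 0 0)) y) x
          + (2 * pone^[i] (fun y => H y 0 1) x
              + (i : ℝ) * pone^[i - 1] (ptwo (fun y => H y 0 0)) x) •
            (((-1 : ℝ) ^ i * Γ i (l * x 0) / l ^ (i + 1)) •
              (ContinuousLinearMap.proj 0 : (Fin 2 → ℝ) →L[ℝ] ℝ)))) x := by
    apply HasFDerivAt.fun_sum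
    intro i hi
    have hik : i ≤ k := by simp only [mem_range] at hi; omega
    exact (hA i hik).mul (hLc1 i hik).1.hasFDerivAt
  have hSdiff : ∀ j : Fin 2, DifferentiableAt ℝ (fun y => ∑ i ∈ range (k + 1),
      ((-1 : ℝ) ^ i * Γ (i + 1) (l * y 0) / l ^ (i + 2)) * Lcoef H i y j) x := by
    intro j
    fin_cases j
    · simp only [Lcoef, Matrix.cons_val_zero]
      exact hS0.differentiableAt
    · simp only [Lcoef, Matrix.cons_val_one, Matrix.head_cons]
      exact hS1.differentiableAt
  have hLkdiff : ∀ j : Fin 2, DifferentiableAt ℝ (fun y => Lcoef H k y j) x := by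
    intro j
    fin_cases j
    · simp only [Lcoef, Matrix.cons_val_zero]
      exact hFd k le_rfl
    · simp only [Lcoef, Matrix.cons_val_one, Matrix.head_cons]
      exact (hLc1 k le_rfl).1
  funext i j
  simp only [Pi.add_apply]
  rw [symGrad_apply hSdiff, symGrad_apply hLkdiff]
  fin_cases i <;> fin_cases j <;>
    simp only [Fin.mk_zero, Fin.mk_one, Fin.isValue, Lcoef, Matrix.cons_val_zero,
      Matrix.cons_val_one, Matrix.head_cons, E22]
  -- value computations
  case _ => -- (0,0)
    have eLk0e1 : fderiv ℝ (fun y => pone^[k] (fun y => H y 0 0) y) x (Pi.single 0 1)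
        = pone^[k + 1] (fun y => H y 0 0) x := fderiv_iter_e1 _ k x
    have eS0e1 : fderiv ℝ (fun y => ∑ i ∈ range (k + 1),
          (-1 : ℝ) ^ i * Γ (i + 1) (l * y 0) / l ^ (i + 2) * pone^[i] (fun y => H y 0 0) y) x
          (Pi.single 0 1)
        = Γ 0 (l * x 0) / l * H x 0 0
          + (-1) ^ k * Γ (k + 1) (l * x 0) / l ^ (k + 2) * pone^[k + 1] (fun y => H y 0 0) x := by
      rw [hS0.fderiv, ContinuousLinearMap.sum_apply]
      have step : ∀ i ∈ range (k + 1),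
          ((((-1 : ℝ) ^ i * Γ (i + 1) (l * x 0) / l ^ (i + 2)) •
              fderiv ℝ (pone^[i] (fun y => H y 0 0)) x
            + pone^[i] (fun y => H y 0 0) x •
              (((-1 : ℝ) ^ i * Γ i (l * x 0) / l ^ (i + 1)) •
                (ContinuousLinearMap.proj 0 : (Fin 2 → ℝ) →L[ℝ] ℝ)))) (Pi.single 0 1)
          = (fun m => (-1 : ℝ) ^ m * Γ m (l * x 0) / l ^ (m + 1)
                * pone^[m] (fun y => H y 0 0) x) i
            - (fun m => (-1 : ℝ) ^ m * Γ m (l * x 0) / l ^ (m + 1)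
                * pone^[m] (fun y => H y 0 0) x) (i + 1) := by
        intro i hi
        simp only [ContinuousLinearMap.add_apply, ContinuousLinearMap.smul_apply,
          ContinuousLinearMap.proj_apply, smul_eq_mul, fderiv_iter_e1, Pi.single_eq_same]
        ring
      rw [Finset.sum_congr rfl step, Finset.sum_range_sub']
      simp only [pow_zero, one_mul, zero_add, pow_one, Function.iterate_zero_apply]
      ring
    rw [eS0e1, eLk0e1]
    rw [if_neg (by decide : ¬ (0 : Fin 2) = 1)]
    ring
  case _ => -- (0,1)
    have eLk1e1 : fderiv ℝ (fun y => 2 * pone^[k] (fun y => H y 0 1) y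
          + (k : ℝ) * pone^[k - 1] (ptwo (fun y => H y 0 0)) y) x (Pi.single 0 1)
        = 2 * pone^[k + 1] (fun y => H y 0 1) x
          + (k : ℝ) * pone^[k] (ptwo (fun y => H y 0 0)) x := (hLc1 k le_rfl).2.1
    have eLk0e2 : fderiv ℝ (fun y => pone^[k] (fun y => H y 0 0) y) x (Pi.single 1 1)
        = pone^[k] (ptwo (fun y => H y 0 0)) x := hF2 k le_rfl
    have eS1e1 : fderiv ℝ (fun y => ∑ i ∈ range (k + 1),
          (-1 : ℝ) ^ i * Γ (i + 1) (l * y 0) / l ^ (i + 2) *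
            (2 * pone^[i] (fun y => H y 0 1) y
              + (i : ℝ) * pone^[i - 1] (ptwo (fun y => H y 0 0)) y)) x (Pi.single 0 1)
        = ∑ i ∈ range (k + 1),
            ((-1 : ℝ) ^ i * Γ (i + 1) (l * x 0) / l ^ (i + 2) *
              (2 * pone^[i + 1] (fun y => H y 0 1) x
                + (i : ℝ) * pone^[i] (ptwo (fun y => H y 0 0)) x)
            + (2 * pone^[i] (fun y => H y 0 1) x
                + (i : ℝ) * pone^[i - 1] (ptwo (fun y => H y 0 0)) x) *
              ((-1 : ℝ) ^ i * Γ i (l * x 0) / l ^ (i + 1))) := by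
      rw [hS1.fderiv, ContinuousLinearMap.sum_apply]
      refine Finset.sum_congr rfl fun i hi => ?_
      have hik : i ≤ k := by simp only [mem_range] at hi; omega
      simp only [ContinuousLinearMap.add_apply, ContinuousLinearMap.smul_apply,
        ContinuousLinearMap.proj_apply, smul_eq_mul, Pi.single_eq_same, mul_one]
      rw [(hLc1 i hik).2.1]
    have eS0e2 : fderiv ℝ (fun y => ∑ i ∈ range (k + 1),
          (-1 : ℝ) ^ i * Γ (i + 1) (l * y 0) / l ^ (i + 2) *
            pone^[i] (fun y => H y 0 0) y) x (Pi.single 1 1)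
        = ∑ i ∈ range (k + 1),
            (-1 : ℝ) ^ i * Γ (i + 1) (l * x 0) / l ^ (i + 2) *
              pone^[i] (ptwo (fun y => H y 0 0)) x := by
      rw [hS0.fderiv, ContinuousLinearMap.sum_apply]
      refine Finset.sum_congr rfl fun i hi => ?_
      have hik : i ≤ k := by simp only [mem_range] at hi; omega
      simp only [ContinuousLinearMap.add_apply, ContinuousLinearMap.smul_apply,
        ContinuousLinearMap.proj_apply, smul_eq_mul]
      rw [hF2 i hik]
      norm_num [Pi.single_apply]
    rw [eS1e1, eS0e2, eLk1e1, eLk0e2]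
    rw [← Finset.sum_add_distrib]
    have step : ∀ i ∈ range (k + 1),
        (((-1 : ℝ) ^ i * Γ (i + 1) (l * x 0) / l ^ (i + 2) *
            (2 * pone^[i + 1] (fun y => H y 0 1) x
              + (i : ℝ) * pone^[i] (ptwo (fun y => H y 0 0)) x)
          + (2 * pone^[i] (fun y => H y 0 1) x
              + (i : ℝ) * pone^[i - 1] (ptwo (fun y => H y 0 0)) x) *
            ((-1 : ℝ) ^ i * Γ i (l * x 0) / l ^ (i + 1)))
          + (-1 : ℝ) ^ i * Γ (i + 1) (l * x 0) / l ^ (i + 2) *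
              pone^[i] (ptwo (fun y => H y 0 0)) x)
        = (fun m => (-1 : ℝ) ^ m * Γ m (l * x 0) / l ^ (m + 1) *
              (2 * pone^[m] (fun y => H y 0 1) x
                + (m : ℝ) * pone^[m - 1] (ptwo (fun y => H y 0 0)) x)) i
          - (fun m => (-1 : ℝ) ^ m * Γ m (l * x 0) / l ^ (m + 1) *
              (2 * pone^[m] (fun y => H y 0 1) x
                + (m : ℝ) * pone^[m - 1] (ptwo (fun y => H y 0 0)) x)) (i + 1) := by
      intro i hi
      simp only [Nat.add_sub_cancel]
      push_cast
      ring
    rw [Finset.sum_congr rfl step, Finset.sum_range_sub']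
    rw [if_neg (by decide : ¬ (0 : Fin 2) = 1)]
    simp only [pow_zero, one_mul, zero_add, pow_one, Function.iterate_zero_apply,
      Nat.cast_zero, zero_mul, add_zero, Nat.add_sub_cancel]
    push_cast
    ring
  case _ => -- (1,0)
    rw [← hsym x]
    have eLk1e1 : fderiv ℝ (fun y => 2 * pone^[k] (fun y => H y 0 1) y
          + (k : ℝ) * pone^[k - 1] (ptwo (fun y => H y 0 0)) y) x (Pi.single 0 1)
        = 2 * pone^[k + 1] (fun y => H y 0 1) x
          + (k : ℝ) * pone^[k] (ptwo (fun y => H y 0 0)) x := (hLc1 k le_rfl).2.1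
    have eLk0e2 : fderiv ℝ (fun y => pone^[k] (fun y => H y 0 0) y) x (Pi.single 1 1)
        = pone^[k] (ptwo (fun y => H y 0 0)) x := hF2 k le_rfl
    have eS1e1 : fderiv ℝ (fun y => ∑ i ∈ range (k + 1),
          (-1 : ℝ) ^ i * Γ (i + 1) (l * y 0) / l ^ (i + 2) *
            (2 * pone^[i] (fun y => H y 0 1) y
              + (i : ℝ) * pone^[i - 1] (ptwo (fun y => H y 0 0)) y)) x (Pi.single 0 1)
        = ∑ i ∈ range (k + 1),
            ((-1 : ℝ) ^ i * Γ (i + 1) (l * x 0) / l ^ (i + 2) *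
              (2 * pone^[i + 1] (fun y => H y 0 1) x
                + (i : ℝ) * pone^[i] (ptwo (fun y => H y 0 0)) x)
            + (2 * pone^[i] (fun y => H y 0 1) x
                + (i : ℝ) * pone^[i - 1] (ptwo (fun y => H y 0 0)) x) *
              ((-1 : ℝ) ^ i * Γ i (l * x 0) / l ^ (i + 1))) := by
      rw [hS1.fderiv, ContinuousLinearMap.sum_apply]
      refine Finset.sum_congr rfl fun i hi => ?_
      have hik : i ≤ k := by simp only [mem_range] at hi; omega
      simp only [ContinuousLinearMap.add_apply, ContinuousLinearMap.smul_apply,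
        ContinuousLinearMap.proj_apply, smul_eq_mul, Pi.single_eq_same, mul_one]
      rw [(hLc1 i hik).2.1]
    have eS0e2 : fderiv ℝ (fun y => ∑ i ∈ range (k + 1),
          (-1 : ℝ) ^ i * Γ (i + 1) (l * y 0) / l ^ (i + 2) *
            pone^[i] (fun y => H y 0 0) y) x (Pi.single 1 1)
        = ∑ i ∈ range (k + 1),
            (-1 : ℝ) ^ i * Γ (i + 1) (l * x 0) / l ^ (i + 2) *
              pone^[i] (ptwo (fun y => H y 0 0)) x := by
      rw [hS0.fderiv, ContinuousLinearMap.sum_apply]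
      refine Finset.sum_congr rfl fun i hi => ?_
      have hik : i ≤ k := by simp only [mem_range] at hi; omega
      simp only [ContinuousLinearMap.add_apply, ContinuousLinearMap.smul_apply,
        ContinuousLinearMap.proj_apply, smul_eq_mul]
      rw [hF2 i hik]
      norm_num [Pi.single_apply]
    rw [eS1e1, eS0e2, eLk1e1, eLk0e2]
    rw [← Finset.sum_add_distrib]
    have step : ∀ i ∈ range (k + 1),
        ((-1 : ℝ) ^ i * Γ (i + 1) (l * x 0) / l ^ (i + 2) *
              pone^[i] (ptwo (fun y => H y 0 0)) x
          + (((-1 : ℝ) ^ i * Γ (i + 1) (l * x 0) / l ^ (i + 2) *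
              (2 * pone^[i + 1] (fun y => H y 0 1) x
                + (i : ℝ) * pone^[i] (ptwo (fun y => H y 0 0)) x)
            + (2 * pone^[i] (fun y => H y 0 1) x
                + (i : ℝ) * pone^[i - 1] (ptwo (fun y => H y 0 0)) x) *
              ((-1 : ℝ) ^ i * Γ i (l * x 0) / l ^ (i + 1)))))
        = (fun m => (-1 : ℝ) ^ m * Γ m (l * x 0) / l ^ (m + 1) *
              (2 * pone^[m] (fun y => H y 0 1) x
                + (m : ℝ) * pone^[m - 1] (ptwo (fun y => H y 0 0)) x)) i
          - (fun m => (-1 : ℝ) ^ m * Γ m (l * x 0) / l ^ (m + 1) *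
              (2 * pone^[m] (fun y => H y 0 1) x
                + (m : ℝ) * pone^[m - 1] (ptwo (fun y => H y 0 0)) x)) (i + 1) := by
      intro i hi
      simp only [Nat.add_sub_cancel]
      push_cast
      ring
    rw [Finset.sum_congr rfl step, Finset.sum_range_sub']
    rw [if_neg (by decide : ¬ (0 : Fin 2) = 1)]
    simp only [pow_zero, one_mul, zero_add, pow_one, Function.iterate_zero_apply,
      Nat.cast_zero, zero_mul, add_zero, Nat.add_sub_cancel]
    push_cast
    ring
  case _ => -- (1,1)
    have hPc : ∀ i : ℕ, Pcoef H (i + 1) x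
        = 2 * pone^[i] (ptwo (fun y => H y 0 1)) x
          + (i : ℝ) * pone^[i - 1] (ptwo (ptwo (fun y => H y 0 0))) x := by
      intro i
      simp only [Pcoef, Nat.succ_ne_zero, if_false, Nat.add_sub_cancel]
      have h2 : i + 1 - 2 = i - 1 := by omega
      rw [h2]
      push_cast
      ring
    have eLk1e2 : fderiv ℝ (fun y => 2 * pone^[k] (fun y => H y 0 1) y
          + (k : ℝ) * pone^[k - 1] (ptwo (fun y => H y 0 0)) y) x (Pi.single 1 1)
        = 2 * pone^[k] (ptwo (fun y => H y 0 1)) x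
          + (k : ℝ) * pone^[k - 1] (ptwo (ptwo (fun y => H y 0 0))) x := (hLc1 k le_rfl).2.2
    have eS1e2 : fderiv ℝ (fun y => ∑ i ∈ range (k + 1),
          (-1 : ℝ) ^ i * Γ (i + 1) (l * y 0) / l ^ (i + 2) *
            (2 * pone^[i] (fun y => H y 0 1) y
              + (i : ℝ) * pone^[i - 1] (ptwo (fun y => H y 0 0)) y)) x (Pi.single 1 1)
        = ∑ i ∈ range (k + 1),
            (-1 : ℝ) ^ i * Γ (i + 1) (l * x 0) / l ^ (i + 2) *
              (2 * pone^[i] (ptwo (fun y => H y 0 1)) x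
                + (i : ℝ) * pone^[i - 1] (ptwo (ptwo (fun y => H y 0 0))) x) := by
      rw [hS1.fderiv, ContinuousLinearMap.sum_apply]
      refine Finset.sum_congr rfl fun i hi => ?_
      have hik : i ≤ k := by simp only [mem_range] at hi; omega
      simp only [ContinuousLinearMap.add_apply, ContinuousLinearMap.smul_apply,
        ContinuousLinearMap.proj_apply, smul_eq_mul]
      rw [(hLc1 i hik).2.2]
      norm_num [Pi.single_apply]
    rw [eS1e2, eLk1e2]
    rw [if_pos trivial]
    rw [add_self_div_two, add_self_div_two, mul_one, mul_one, add_assoc]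
    rw [← Finset.sum_add_distrib]
    have step : ∀ i ∈ range (k + 1),
        ((-1 : ℝ) ^ i * Γ (i + 1) (l * x 0) / l ^ (i + 2) *
            (2 * pone^[i] (ptwo (fun y => H y 0 1)) x
              + (i : ℝ) * pone^[i - 1] (ptwo (ptwo (fun y => H y 0 0))) x)
          + (-1 : ℝ) ^ i * Γ i (l * x 0) / l ^ (i + 1) * Pcoef H i x)
        = (fun m => (-1 : ℝ) ^ m * Γ m (l * x 0) / l ^ (m + 1) * Pcoef H m x) i
          - (fun m => (-1 : ℝ) ^ m * Γ m (l * x 0) / l ^ (m + 1) * Pcoef H m x) (i + 1) := by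
      intro i hi
      simp only []
      rw [hPc i]
      push_cast
      ring
    rw [Finset.sum_congr rfl step, Finset.sum_range_sub']
    simp only [pow_zero, one_mul, zero_add, pow_one]
    rw [hPc k]
    simp only [Pcoef, if_pos rfl]
    push_cast
    ring
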